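/- arXiv:1510.02014 — 2 statements merged into one kernel-verified Lean document; each statement's English description precedes it below -/
import Mathlib

section
/- Let G be a finite group and p a prime dividing |G| such that p^{2·ν_p(exp(G))} · exp(Out(G)) ≤ p^{ν_p(|G|)}. Then for every automorphism α of G, the least common multiple over all x ∈ G of the orders of the permutations A_{x,α} is at most |G|. -/
/-- The bijective affine map `A_{x,α} : g ↦ x * α g` as a permutation of `G`. -/
def Aff {G : Type*} [Group G] (x : G) (α : G ≃* G) : Equiv.Perm G :=
  α.toEquiv.trans (Equiv.mulLeft x)

/-- The group of inner automorphisms of `G`, i.e. the range of `MulAut.conj : G →* MulAut G`. -/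
def Inn (G : Type*) [Group G] : Subgroup (MulAut G) := (MulAut.conj : G →* MulAut G).range

instance Inn.normal (G : Type*) [Group G] : (Inn G).Normal := by
  constructor
  rintro _ ⟨g, rfl⟩ σ
  exact ⟨σ g, by ext h; simp [MulAut.conj]⟩

/-- The outer automorphism group `Out(G) := Aut(G)/Inn(G)`. -/
def Out (G : Type*) [Group G] := MulAut G ⧸ Inn G

instance (G : Type*) [Group G] : Group (Out G) := QuotientGroup.Quotient.group (Inn G)

lemma Aff_apply {G : Type*} [Group G] (x : G) (α : G ≃* G) (g : G) :
    Aff x α g = x * α g := rfl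

lemma Aff_conj_pow_apply {G : Type*} [Group G] (y c : G) (n : ℕ) (g : G) :
    ((Aff y (MulAut.conj c)) ^ n) g = (y * c) ^ n * g * (c⁻¹) ^ n := by
  induction n with
  | zero => simp
  | succ n ih =>
    rw [pow_succ', Equiv.Perm.mul_apply, ih, Aff_apply]
    simp only [MulAut.conj_apply, pow_succ', pow_succ, mul_assoc]
    rw [pow_mul_comm']

lemma Aff_pow {G : Type*} [Group G] (x : G) (α : MulAut G) (n : ℕ) :
    ∃ y : G, (Aff x α) ^ n = Aff y (α ^ n) := by
  induction n with
  | zero => exact ⟨1, by ext g; simp [Aff_apply]⟩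
  | succ n ih =>
    obtain ⟨y, hy⟩ := ih
    refine ⟨x * α y, ?_⟩
    rw [pow_succ', hy]
    ext g
    rw [Equiv.Perm.mul_apply, Aff_apply, Aff_apply, Aff_apply, pow_succ',
      MulAut.mul_apply, map_mul, mul_assoc]

theorem stmt_7 {G : Type*} [Group G] [Fintype G] {p : ℕ} (hp : p.Prime)
    (hpG : p ∣ Fintype.card G)
    (hineq : p ^ (2 * (Monoid.exponent G).factorization p) * Monoid.exponent (Out G) ≤
      p ^ ((Fintype.card G).factorization p)) :
    ∀ α : G ≃* G,
      (Finset.univ.lcm fun x : G => orderOf (Aff x α)) ≤ Fintype.card G := by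
  intro α
  have hfinAut : Finite (MulAut G) :=
    Finite.of_injective (fun f : MulAut G => f.toEquiv)
      (fun f g h => by ext x; exact congrArg (fun e : G ≃ G => e x) h)
  have hfinOut : Finite (Out G) := Quotient.finite _
  set e := Monoid.exponent (Out G) with he
  set k := Monoid.exponent G with hk
  have he0 : e ≠ 0 := Monoid.exponent_ne_zero_of_finite
  have hk0 : k ≠ 0 := Monoid.exponent_ne_zero_of_finite
  -- each affine map has order dividing e * k
  have hdvd : ∀ x : G, orderOf (Aff x α) ∣ e * k := by
    intro x
    apply orderOf_dvd_of_pow_eq_one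
    have h1 : (α : MulAut G) ^ e ∈ Inn G := by
      have h2 : ((QuotientGroup.mk' (Inn G)) α) ^ e = 1 := by
        exact Monoid.pow_exponent_eq_one _
      rw [← map_pow] at h2
      exact (QuotientGroup.eq_one_iff _).mp h2
    obtain ⟨c, hc⟩ := h1
    obtain ⟨y, hy⟩ := Aff_pow x α e
    rw [pow_mul, hy, ← hc]
    ext g
    rw [Aff_conj_pow_apply, Monoid.pow_exponent_eq_one, Monoid.pow_exponent_eq_one]
    simp
  have hL : (Finset.univ.lcm fun x : G => orderOf (Aff x α)) ∣ e * k :=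
    Finset.lcm_dvd fun x _ => hdvd x
  -- arithmetic: e * k ≤ card G
  have hcard0 : Fintype.card G ≠ 0 := Fintype.card_ne_zero
  set a := k.factorization p with ha
  set b := (Fintype.card G).factorization p with hb
  have hkfac : p ^ a * (k / p ^ a) = k := Nat.ordProj_mul_ordCompl_eq_self k p
  have hcfac : p ^ b * (Fintype.card G / p ^ b) = Fintype.card G :=
    Nat.ordProj_mul_ordCompl_eq_self (Fintype.card G) p
  have hst : k / p ^ a ∣ Fintype.card G / p ^ b :=
    Nat.ordCompl_dvd_ordCompl_of_dvd Group.exponent_dvd_card p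
  have ht0 : 0 < Fintype.card G / p ^ b :=
    Nat.ordCompl_pos p hcard0
  have hsle : k / p ^ a ≤ Fintype.card G / p ^ b := Nat.le_of_dvd ht0 hst
  have h1 : e * p ^ a ≤ p ^ b := by
    calc e * p ^ a ≤ (p ^ a * e) * p ^ a := by
          exact Nat.mul_le_mul_right _ (Nat.le_mul_of_pos_left e (pow_pos hp.pos a))
      _ = p ^ (2 * a) * e := by ring
      _ ≤ p ^ b := hineq
  have hek : e * k ≤ Fintype.card G := by
    calc e * k = (e * p ^ a) * (k / p ^ a) := by rw [mul_assoc, hkfac]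
      _ ≤ p ^ b * (Fintype.card G / p ^ b) := Nat.mul_le_mul h1 hsle
      _ = Fintype.card G := hcfac
  exact le_trans (Nat.le_of_dvd (Nat.pos_of_ne_zero (by positivity)) hL) hek
end

section
/- Let G be a finite group, α an automorphism of G and x ∈ G. Then ord(A_{x,α}) = ord(α) · ord(sh_α(x)), where sh_α(x) := x · α(x) · α²(x) ⋯ α^{ord(α)−1}(x). -/
/-- `sh_α(x) := x * α(x) * α²(x) * ⋯ * α^(ord(α)-1)(x)`. -/
noncomputable def sh {G : Type*} [Group G] (α : MulAut G) (x : G) : G :=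
  ((List.range (orderOf α)).map fun i => (α ^ i) x).prod

noncomputable def Psh {G : Type*} [Group G] (α : MulAut G) (x : G) (n : ℕ) : G :=
  ((List.range n).map fun i => (α ^ i) x).prod

lemma Psh_add {G : Type*} [Group G] (α : MulAut G) (x : G) (a b : ℕ) :
    Psh α x (a + b) = Psh α x a * (α ^ a) (Psh α x b) := by
  unfold Psh
  rw [List.range_add, List.map_append, List.prod_append]
  congr 1
  rw [map_list_prod (α ^ a), List.map_map, List.map_map]
  simp [Function.comp_def, pow_add, MulAut.mul_apply]

lemma Aff_pow_apply {G : Type*} [Group G] (α : MulAut G) (x g : G) (n : ℕ) :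
    ((Aff x α) ^ n) g = Psh α x n * (α ^ n) g := by
  induction n generalizing g with
  | zero => simp [Psh]
  | succ n ih =>
    rw [pow_succ, Equiv.Perm.mul_apply, Aff_apply, ih, map_mul]
    unfold Psh
    rw [List.range_succ, List.map_append, List.prod_append]
    simp [mul_assoc, pow_succ, MulAut.mul_apply]

lemma Psh_mul_order {G : Type*} [Group G] (α : MulAut G) (x : G) (k : ℕ) :
    Psh α x (k * orderOf α) = (sh α x) ^ k := by
  induction k with
  | zero => simp [Psh]
  | succ k ih =>
    have h1 : (k + 1) * orderOf α = k * orderOf α + orderOf α := by ring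
    rw [h1, Psh_add, ih]
    have h2 : (α : MulAut G) ^ (k * orderOf α) = 1 := by
      rw [mul_comm, pow_mul, pow_orderOf_eq_one, one_pow]
    have h3 : Psh α x (orderOf α) = sh α x := rfl
    rw [h2, h3, pow_succ]
    simp

theorem stmt_10 {G : Type*} [Group G] [Fintype G] (α : MulAut G) (x : G) :
    orderOf (Aff x α) = orderOf α * orderOf (sh α x) := by
  have hαm : α ^ orderOf α = 1 := pow_orderOf_eq_one α
  have key : ∀ n, (Aff x α) ^ n = 1 ↔ (Psh α x n = 1 ∧ α ^ n = 1) := by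
    intro n
    constructor
    · intro h
      have h1 : ∀ g : G, Psh α x n * (α ^ n) g = g := fun g => by
        rw [← Aff_pow_apply, h]; rfl
      have hp : Psh α x n = 1 := by simpa using h1 1
      refine ⟨hp, ?_⟩
      ext g
      have := h1 g
      rw [hp, one_mul] at this
      simpa using this
    · rintro ⟨hp, ha⟩
      ext g
      rw [Equiv.Perm.one_apply, Aff_pow_apply, hp, ha]
      simp
  apply Nat.dvd_antisymm
  · apply orderOf_dvd_of_pow_eq_one
    rw [key]
    constructor
    · rw [mul_comm, Psh_mul_order, pow_orderOf_eq_one]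
    · rw [pow_mul, hαm, one_pow]
  · have hN : (Aff x α) ^ orderOf (Aff x α) = 1 := pow_orderOf_eq_one _
    rw [key] at hN
    obtain ⟨hp, ha⟩ := hN
    obtain ⟨t, ht⟩ := orderOf_dvd_of_pow_eq_one ha
    rw [ht, mul_comm, Psh_mul_order] at hp
    have hk : orderOf (sh α x) ∣ t := orderOf_dvd_of_pow_eq_one hp
    rw [ht]
    exact mul_dvd_mul_left _ hk
end
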